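/- Second-order remainder estimates (inequalities (4.2) in the proof of Lemma 3.2): Let d ≥ 1, C > 0 and p > 3. Let g : ℝ × [−C,C]^{d−1} → ℝ be continuous and three times continuously differentiable in its first argument, with ∂₁ g, ∂²₁₁ g, ∂³₁₁₁ g jointly continuous on ℝ × [−C,C]^{d−1}. Define f(x,z) := |x|^p g(x,z), and for x, y ∈ ℝ, z ∈ [−C,C]^{d−1} set k(x,y,z) := f(x+y,z) − f(x,z) − f(y,z) and G(x,y,z) := k(x,y,z) − ∂₁ f(x,z) · y. Then there exist a constant K > 0 and a sequence (β_m)_{m≥1} with β_m → 0 such that for every m ≥ 1, all x with |x| ≤ 3/m, all y with |y| ≤ 1/m and all z ∈ [−C,C]^{d−1}: |k(x,y,z)| ≤ K β_m |x||y| and |G(x,y,z)| ≤ K β_m |x| |y|². -/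

import Mathlib

open Filter Topology

lemma abs_rpow_succ' (u : ℝ) {a : ℝ} (ha : a + 1 ≠ 0) : |u| * |u| ^ a = |u| ^ (a + 1) := by
  rcases eq_or_ne u 0 with rfl | hu
  · simp [Real.zero_rpow ha]
  · rw [Real.rpow_add (abs_pos.mpr hu), Real.rpow_one, mul_comm]

lemma sq_mul_abs_rpow (u : ℝ) {a : ℝ} (h1 : a + 1 ≠ 0) (h2 : a + 1 + 1 ≠ 0) :
    u * u * |u| ^ a = |u| ^ (a + 1 + 1) := by
  rw [← abs_mul_abs_self, mul_assoc, abs_rpow_succ' u h1, abs_rpow_succ' u h2]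

lemma abs_mem_uIcc_zero {t y : ℝ} (h : t ∈ Set.uIcc 0 y) : |t| ≤ |y| := by
  rcases Set.mem_uIcc.mp h with ⟨h1, h2⟩ | ⟨h1, h2⟩ <;>
    exact abs_le.mpr ⟨by linarith [neg_abs_le y, abs_nonneg y],
      by linarith [le_abs_self y, abs_nonneg y]⟩

lemma key_taylor (F F1 F2 F3 : ℝ → ℝ)
    (hF : ∀ u, HasDerivAt F (F1 u) u)
    (hF1 : ∀ u, HasDerivAt F1 (F2 u) u)
    (hF2 : ∀ u, HasDerivAt F2 (F3 u) u)
    (hF0 : F 0 = 0) (hF10 : F1 0 = 0)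
    (r C2 C3 : ℝ) (hr : 0 < r)
    (hC2 : ∀ u, |u| ≤ 4 * r → |F2 u| ≤ C2)
    (hC3 : ∀ u, |u| ≤ 4 * r → |F3 u| ≤ C3)
    (x y : ℝ) (hx : |x| ≤ 3 * r) (hy : |y| ≤ r) :
    |F (x + y) - F x - F y| ≤ C2 * |x| * |y| ∧
      |F (x + y) - F x - F y - F1 x * y| ≤ C3 * |x| * |y| ^ 2 := by
  have hC2' : 0 ≤ C2 := le_trans (abs_nonneg _) (hC2 0 (by rw [abs_zero]; linarith))
  have hC3' : 0 ≤ C3 := le_trans (abs_nonneg _) (hC3 0 (by rw [abs_zero]; linarith))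
  have hconv : Convex ℝ (Set.Icc (-(4*r)) (4*r)) := convex_Icc _ _
  have hmem : ∀ t : ℝ, |t| ≤ r → t ∈ Set.Icc (-(4*r)) (4*r) ∧ x + t ∈ Set.Icc (-(4*r)) (4*r) := by
    intro t ht
    obtain ⟨h1, h2⟩ := abs_le.mp ht
    obtain ⟨h3, h4⟩ := abs_le.mp hx
    exact ⟨⟨by linarith, by linarith⟩, ⟨by linarith, by linarith⟩⟩
  have inner2 : ∀ t, |t| ≤ r → |F1 (x+t) - F1 t| ≤ C2 * |x| := by
    intro t ht
    obtain ⟨h1, h2⟩ := hmem t ht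
    have := hconv.norm_image_sub_le_of_norm_hasDerivWithin_le
      (f := F1) (f' := F2) (fun u _ => (hF1 u).hasDerivWithinAt)
      (fun u hu => by
        rw [Real.norm_eq_abs]
        exact hC2 u (abs_le.mpr ⟨by linarith [hu.1], hu.2⟩)) h1 h2
    simpa [Real.norm_eq_abs] using this
  have inner3 : ∀ t, |t| ≤ r → |F2 (x+t) - F2 t| ≤ C3 * |x| := by
    intro t ht
    obtain ⟨h1, h2⟩ := hmem t ht
    have := hconv.norm_image_sub_le_of_norm_hasDerivWithin_le
      (f := F2) (f' := F3) (fun u _ => (hF2 u).hasDerivWithinAt)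
      (fun u hu => by
        rw [Real.norm_eq_abs]
        exact hC3 u (abs_le.mpr ⟨by linarith [hu.1], hu.2⟩)) h1 h2
    simpa [Real.norm_eq_abs] using this
  have hconvy : Convex ℝ (Set.uIcc 0 y) := convex_uIcc _ _
  have hd1 : ∀ t : ℝ, HasDerivAt (fun s => F (x + s) - F x - F s) (F1 (x + t) - F1 t) t := by
    intro t
    have h1 : HasDerivAt (fun s : ℝ => F (x + s)) (F1 (x + t)) t := by
      have := (hF (x + t)).comp t ((hasDerivAt_id t).const_add x)
      simpa [Function.comp_def] using this
    exact (h1.sub_const (F x)).sub (hF t)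
  have part1 : |F (x + y) - F x - F y| ≤ C2 * |x| * |y| := by
    have hb : ∀ t ∈ Set.uIcc 0 y, ‖F1 (x+t) - F1 t‖ ≤ C2 * |x| := fun t ht => by
      rw [Real.norm_eq_abs]; exact inner2 t ((abs_mem_uIcc_zero ht).trans hy)
    have := hconvy.norm_image_sub_le_of_norm_hasDerivWithin_le
      (fun t _ => (hd1 t).hasDerivWithinAt) hb Set.left_mem_uIcc Set.right_mem_uIcc
    simp only [add_zero, hF0, sub_zero, sub_self, Real.norm_eq_abs] at this
    simpa using this
  have hd2 : ∀ t : ℝ, HasDerivAt (fun s => F1 (x + s) - F1 s - F1 x)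
      (F2 (x + t) - F2 t) t := by
    intro t
    have h1 : HasDerivAt (fun s : ℝ => F1 (x + s)) (F2 (x + t)) t := by
      have := (hF1 (x + t)).comp t ((hasDerivAt_id t).const_add x)
      simpa [Function.comp_def] using this
    simpa using (h1.sub (hF1 t)).sub_const (F1 x)
  have hψ'b : ∀ t ∈ Set.uIcc 0 y, ‖F1 (x + t) - F1 t - F1 x‖ ≤ C3 * |x| * |y| := by
    intro t ht
    have hb : ∀ s ∈ Set.uIcc 0 y, ‖F2 (x+s) - F2 s‖ ≤ C3 * |x| := fun s hs => by
      rw [Real.norm_eq_abs]; exact inner3 s ((abs_mem_uIcc_zero hs).trans hy)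
    have := hconvy.norm_image_sub_le_of_norm_hasDerivWithin_le
      (fun s _ => (hd2 s).hasDerivWithinAt) hb Set.left_mem_uIcc ht
    simp only [add_zero, hF10, sub_zero, sub_self, Real.norm_eq_abs] at this ⊢
    have ht' : |t| ≤ |y| := abs_mem_uIcc_zero ht
    have h1 : |F1 (x + t) - F1 t - F1 x| ≤ C3 * |x| * |t| := by simpa using this
    refine h1.trans ?_
    rw [mul_assoc, mul_assoc]
    exact mul_le_mul_of_nonneg_left (mul_le_mul_of_nonneg_left ht' (abs_nonneg x)) hC3'
  have hd3 : ∀ t : ℝ, HasDerivAt (fun s => F (x + s) - F x - F s - F1 x * s)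
      (F1 (x + t) - F1 t - F1 x) t := by
    intro t
    have h1 : HasDerivAt (fun s : ℝ => F (x + s)) (F1 (x + t)) t := by
      have := (hF (x + t)).comp t ((hasDerivAt_id t).const_add x)
      simpa [Function.comp_def] using this
    have h2 : HasDerivAt (fun s : ℝ => F1 x * s) (F1 x) t := by
      simpa using (hasDerivAt_id t).const_mul (F1 x)
    exact ((h1.sub_const (F x)).sub (hF t)).sub h2
  have part2 : |F (x + y) - F x - F y - F1 x * y| ≤ C3 * |x| * |y| ^ 2 := by
    have := hconvy.norm_image_sub_le_of_norm_hasDerivWithin_le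
      (fun t _ => (hd3 t).hasDerivWithinAt) hψ'b Set.left_mem_uIcc Set.right_mem_uIcc
    simp only [add_zero, hF0, mul_zero, sub_zero, sub_self, Real.norm_eq_abs] at this
    have h1 : |F (x + y) - F x - F y - F1 x * y| ≤ C3 * |x| * |y| * |y| := by
      simpa using this
    refine h1.trans_eq ?_
    ring
  exact ⟨part1, part2⟩

set_option maxHeartbeats 1600000 in
theorem stmt8 (d : ℕ) (hd : 1 ≤ d) (C p : ℝ) (hC : 0 < C) (hp : 3 < p)
    (g g₁ g₂ g₃ : ℝ → (Fin (d - 1) → ℝ) → ℝ)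
    (hg_cont : ContinuousOn (fun q : ℝ × (Fin (d - 1) → ℝ) => g q.1 q.2)
      (Set.univ ×ˢ {z | ∀ i, |z i| ≤ C}))
    (hg₁_cont : ContinuousOn (fun q : ℝ × (Fin (d - 1) → ℝ) => g₁ q.1 q.2)
      (Set.univ ×ˢ {z | ∀ i, |z i| ≤ C}))
    (hg₂_cont : ContinuousOn (fun q : ℝ × (Fin (d - 1) → ℝ) => g₂ q.1 q.2)
      (Set.univ ×ˢ {z | ∀ i, |z i| ≤ C}))
    (hg₃_cont : ContinuousOn (fun q : ℝ × (Fin (d - 1) → ℝ) => g₃ q.1 q.2)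
      (Set.univ ×ˢ {z | ∀ i, |z i| ≤ C}))
    (hg₁ : ∀ z : Fin (d - 1) → ℝ, (∀ i, |z i| ≤ C) → ∀ x : ℝ,
      HasDerivAt (fun u => g u z) (g₁ x z) x)
    (hg₂ : ∀ z : Fin (d - 1) → ℝ, (∀ i, |z i| ≤ C) → ∀ x : ℝ,
      HasDerivAt (fun u => g₁ u z) (g₂ x z) x)
    (hg₃ : ∀ z : Fin (d - 1) → ℝ, (∀ i, |z i| ≤ C) → ∀ x : ℝ,
      HasDerivAt (fun u => g₂ u z) (g₃ x z) x)
    (f f₁ : ℝ → (Fin (d - 1) → ℝ) → ℝ)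
    (hf : ∀ x z, f x z = |x| ^ p * g x z)
    (hf₁ : ∀ z : Fin (d - 1) → ℝ, (∀ i, |z i| ≤ C) → ∀ x : ℝ,
      HasDerivAt (fun u => f u z) (f₁ x z) x) :
    ∃ K : ℝ, 0 < K ∧ ∃ β : ℕ → ℝ, Filter.Tendsto β Filter.atTop (nhds 0) ∧
      ∀ m : ℕ, 1 ≤ m → ∀ x : ℝ, |x| ≤ 3 / (m : ℝ) → ∀ y : ℝ, |y| ≤ 1 / (m : ℝ) →
        ∀ z : Fin (d - 1) → ℝ, (∀ i, |z i| ≤ C) →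
          |f (x + y) z - f x z - f y z| ≤ K * β m * |x| * |y| ∧
          |f (x + y) z - f x z - f y z - f₁ x z * y| ≤ K * β m * |x| * |y| ^ 2 := by
  classical
  -- uniform bounds on g, g₁, g₂, g₃
  have hZc : IsCompact {z : Fin (d-1) → ℝ | ∀ i, |z i| ≤ C} := by
    have hZeq : {z : Fin (d-1) → ℝ | ∀ i, |z i| ≤ C}
        = Set.pi Set.univ (fun _ => Set.Icc (-C) C) := by
      ext z; simp [abs_le, Set.mem_pi, Pi.le_def, forall_and]
    rw [hZeq]; exact isCompact_univ_pi fun _ => isCompact_Icc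
  have getM : ∀ h : ℝ → (Fin (d-1) → ℝ) → ℝ,
      ContinuousOn (fun q : ℝ × (Fin (d - 1) → ℝ) => h q.1 q.2)
        (Set.univ ×ˢ {z | ∀ i, |z i| ≤ C}) →
      ∃ M : ℝ, ∀ (u : ℝ) (z : Fin (d-1) → ℝ), |u| ≤ 4 → (∀ i, |z i| ≤ C) →
        |h u z| ≤ M := by
    intro h hcont
    have hSc : IsCompact ((Set.Icc (-4:ℝ) 4) ×ˢ {z : Fin (d-1) → ℝ | ∀ i, |z i| ≤ C}) :=
      isCompact_Icc.prod hZc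
    have hsub : (Set.Icc (-4:ℝ) 4) ×ˢ {z : Fin (d-1) → ℝ | ∀ i, |z i| ≤ C} ⊆
        Set.univ ×ˢ {z | ∀ i, |z i| ≤ C} := Set.prod_mono (Set.subset_univ _) subset_rfl
    obtain ⟨M0, hM0⟩ := hSc.exists_bound_of_continuousOn (hcont.mono hsub)
    refine ⟨M0, fun u z hu hz => ?_⟩
    have := hM0 (u, z) ⟨Set.mem_Icc.mpr (abs_le.mp hu), hz⟩
    rwa [Real.norm_eq_abs] at this
  obtain ⟨M0, hM0⟩ := getM g hg_cont
  obtain ⟨M1, hM1b⟩ := getM g₁ hg₁_cont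
  obtain ⟨M2, hM2b⟩ := getM g₂ hg₂_cont
  obtain ⟨M3, hM3b⟩ := getM g₃ hg₃_cont
  set M : ℝ := max 1 (max (max M0 M1) (max M2 M3)) with hMdef
  have hM1 : (1:ℝ) ≤ M := le_max_left _ _
  have hM0' : (0:ℝ) ≤ M := by linarith
  have hMg : ∀ (u : ℝ) (z : Fin (d-1) → ℝ), |u| ≤ 4 → (∀ i, |z i| ≤ C) →
      |g u z| ≤ M ∧ |g₁ u z| ≤ M ∧ |g₂ u z| ≤ M ∧ |g₃ u z| ≤ M := by
    intro u z hu hz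
    refine ⟨(hM0 u z hu hz).trans ?_, (hM1b u z hu hz).trans ?_,
      (hM2b u z hu hz).trans ?_, (hM3b u z hu hz).trans ?_⟩
    · exact le_trans (le_trans (le_max_left M0 M1) (le_max_left _ _)) (le_max_right 1 _)
    · exact le_trans (le_trans (le_max_right M0 M1) (le_max_left _ _)) (le_max_right 1 _)
    · exact le_trans (le_trans (le_max_left M2 M3) (le_max_right _ _)) (le_max_right 1 _)
    · exact le_trans (le_trans (le_max_right M2 M3) (le_max_right _ _)) (le_max_right 1 _)
  have hp1 : (1:ℝ) < p := by linarith
  have hp2 : (1:ℝ) < p - 2 := by linarith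
  have hppos : (0:ℝ) < p := by linarith
  -- the constant and the sequence
  have hcpos : (0:ℝ) < p^3 + 9*p^2 + 38*p + 64 := by nlinarith
  refine ⟨M * (p^3 + 9*p^2 + 38*p + 64),
    by nlinarith [mul_le_mul_of_nonneg_right hM1 hcpos.le],
    fun m => (4 / (m:ℝ)) ^ (p - 3), ?_, ?_⟩
  · -- tendsto
    have h1 : Tendsto (fun m : ℕ => ((m:ℝ)) ^ (-(p-3))) atTop (nhds 0) :=
      (tendsto_rpow_neg_atTop (by linarith)).comp tendsto_natCast_atTop_atTop
    have h2 := h1.const_mul ((4:ℝ)^(p-3))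
    rw [mul_zero] at h2
    refine h2.congr fun m => ?_
    rcases Nat.eq_zero_or_pos m with rfl | hm
    · rw [Nat.cast_zero, div_zero, Real.zero_rpow (show p - 3 ≠ 0 by intro hc; linarith),
        Real.zero_rpow (neg_ne_zero.mpr (show p - 3 ≠ 0 by intro hc; linarith)), mul_zero]
    · have hm' : (0:ℝ) < m := by exact_mod_cast hm
      rw [Real.div_rpow (by norm_num) hm'.le, Real.rpow_neg hm'.le, div_eq_mul_inv]
  · intro m hm x hx y hy z hz
    have hm1 : (1:ℝ) ≤ (m:ℝ) := by exact_mod_cast hm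
    have hm0 : (0:ℝ) < m := by linarith
    set B : ℝ := (4 / (m:ℝ)) ^ (p - 3) with hBdef
    have hB0 : (0:ℝ) ≤ B := Real.rpow_nonneg (by positivity) _
    -- derivative chain for fixed z
    have hdA1 : ∀ u : ℝ, HasDerivAt (fun u : ℝ => p * |u| ^ (p-2) * u)
        (p * (p-1) * |u| ^ (p-2)) u := by
      intro u
      have h := ((hasDerivAt_abs_rpow u hp2).mul (hasDerivAt_id u)).const_mul p
      have h2 : u * u * |u| ^ (p - 2 - 2) = |u| ^ (p - 2) := by
        rw [sq_mul_abs_rpow u (show p-2-2+1 ≠ 0 by intro hc; linarith)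
          (show p-2-2+1+1 ≠ 0 by intro hc; linarith), show p-2-2+1+1 = p-2 from by ring]
      refine (h.congr_deriv ?_).congr_of_eventuallyEq (Filter.Eventually.of_forall fun v => ?_)
      · rw [mul_one, id_eq]
        linear_combination (p * (p - 2)) * h2
      · simp only [Pi.mul_apply, id_eq, mul_assoc]
    have hdA2 : ∀ u : ℝ, HasDerivAt (fun u : ℝ => p * (p-1) * |u| ^ (p-2))
        (p * (p-1) * ((p-2) * |u| ^ (p-2-2) * u)) u := fun u =>
      (hasDerivAt_abs_rpow u hp2).const_mul (p*(p-1))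
    have hdF : ∀ u : ℝ, HasDerivAt (fun u : ℝ => |u| ^ p * g u z)
        (p * |u| ^ (p-2) * u * g u z + |u| ^ p * g₁ u z) u := fun u =>
      (hasDerivAt_abs_rpow u hp1).mul (hg₁ z hz u)
    have hdF1 : ∀ u : ℝ, HasDerivAt
        (fun u : ℝ => p * |u| ^ (p-2) * u * g u z + |u| ^ p * g₁ u z)
        (p * (p-1) * |u| ^ (p-2) * g u z + p * |u| ^ (p-2) * u * g₁ u z
          + (p * |u| ^ (p-2) * u * g₁ u z + |u| ^ p * g₂ u z)) u := fun u =>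
      ((hdA1 u).mul (hg₁ z hz u)).add ((hasDerivAt_abs_rpow u hp1).mul (hg₂ z hz u))
    have hdF2 : ∀ u : ℝ, HasDerivAt
        (fun u : ℝ => p * (p-1) * |u| ^ (p-2) * g u z + p * |u| ^ (p-2) * u * g₁ u z
          + (p * |u| ^ (p-2) * u * g₁ u z + |u| ^ p * g₂ u z))
        (p * (p-1) * ((p-2) * |u| ^ (p-2-2) * u) * g u z + p * (p-1) * |u| ^ (p-2) * g₁ u z
          + (p * (p-1) * |u| ^ (p-2) * g₁ u z + p * |u| ^ (p-2) * u * g₂ u z)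
          + (p * (p-1) * |u| ^ (p-2) * g₁ u z + p * |u| ^ (p-2) * u * g₂ u z
            + (p * |u| ^ (p-2) * u * g₂ u z + |u| ^ p * g₃ u z))) u := fun u =>
      ((((hdA2 u).mul (hg₁ z hz u)).add ((hdA1 u).mul (hg₂ z hz u))).add
        (((hdA1 u).mul (hg₂ z hz u)).add ((hasDerivAt_abs_rpow u hp1).mul (hg₃ z hz u))))
    -- bounds on second and third derivatives
    have hbounds : ∀ u : ℝ, |u| ≤ 4 * (1/(m:ℝ)) →
        |p * (p-1) * |u| ^ (p-2) * g u z + p * |u| ^ (p-2) * u * g₁ u z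
          + (p * |u| ^ (p-2) * u * g₁ u z + |u| ^ p * g₂ u z)|
          ≤ M * (p^3 + 9*p^2 + 38*p + 64) * B ∧
        |p * (p-1) * ((p-2) * |u| ^ (p-2-2) * u) * g u z + p * (p-1) * |u| ^ (p-2) * g₁ u z
          + (p * (p-1) * |u| ^ (p-2) * g₁ u z + p * |u| ^ (p-2) * u * g₂ u z)
          + (p * (p-1) * |u| ^ (p-2) * g₁ u z + p * |u| ^ (p-2) * u * g₂ u z
            + (p * |u| ^ (p-2) * u * g₂ u z + |u| ^ p * g₃ u z))|
          ≤ M * (p^3 + 9*p^2 + 38*p + 64) * B := by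
      intro u hu
      have hu4m : |u| ≤ 4 / m := by
        calc |u| ≤ 4 * (1/(m:ℝ)) := hu
          _ = 4 / m := by ring
      have ht : (0:ℝ) < 4/m := by positivity
      have ht4 : (4:ℝ)/m ≤ 4 := div_le_self (by norm_num) hm1
      have hu4 : |u| ≤ 4 := hu4m.trans ht4
      obtain ⟨hb0, hb1, hb2, hb3⟩ := hMg u z hu4 hz
      have hrn : (0:ℝ) ≤ |u| ^ (p-2) := Real.rpow_nonneg (abs_nonneg u) _
      have hrn4 : (0:ℝ) ≤ |u| ^ (p-2-2) := Real.rpow_nonneg (abs_nonneg u) _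
      have e3 : |u| ^ (p-3) ≤ B := by
        rw [hBdef]; exact Real.rpow_le_rpow (abs_nonneg u) hu4m (by linarith)
      have e2 : |u| ^ (p-2) ≤ 4 * B := by
        have h1 : |u|^(p-2) ≤ (4/(m:ℝ))^(p-2) :=
          Real.rpow_le_rpow (abs_nonneg u) hu4m (by linarith)
        have h2 : (4/(m:ℝ))^(p-2) = (4/(m:ℝ))^(p-3) * (4/m) := by
          rw [show p-2 = p-3+1 from by ring, Real.rpow_add_one (ne_of_gt ht)]
        rw [h2, ← hBdef] at h1
        calc |u|^(p-2) ≤ B * (4/m) := h1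
          _ ≤ B * 4 := mul_le_mul_of_nonneg_left ht4 hB0
          _ = 4 * B := by ring
      have e0 : |u| ^ p ≤ 64 * B := by
        have h1 : |u|^p ≤ (4/(m:ℝ))^p := Real.rpow_le_rpow (abs_nonneg u) hu4m (by linarith)
        have h2 : (4/(m:ℝ))^p = (4/(m:ℝ))^(p-3) * (4/m) * (4/m) * (4/m) := by
          conv_lhs => rw [show p = p-3+1+1+1 from by ring]
          rw [Real.rpow_add_one (ne_of_gt ht),
            Real.rpow_add_one (ne_of_gt ht), Real.rpow_add_one (ne_of_gt ht)]
        rw [h2, ← hBdef] at h1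
        have c1 : B * (4/(m:ℝ)) ≤ B * 4 := mul_le_mul_of_nonneg_left ht4 hB0
        have c2 : B * (4/(m:ℝ)) * (4/(m:ℝ)) ≤ B * 4 * 4 :=
          mul_le_mul c1 ht4 ht.le (mul_nonneg hB0 (by norm_num))
        have c3 : B * (4/(m:ℝ)) * (4/(m:ℝ)) * (4/(m:ℝ)) ≤ B * 4 * 4 * 4 :=
          mul_le_mul c2 ht4 ht.le (mul_nonneg (mul_nonneg hB0 (by norm_num)) (by norm_num))
        linarith
      have eA1 : |u| ^ (p-2) * |u| ≤ 16 * B := by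
        rw [mul_comm, abs_rpow_succ' u (show p-2+1 ≠ 0 by intro hc; linarith),
          show p-2+1 = p-1 from by ring]
        have h1 : |u|^(p-1) ≤ (4/(m:ℝ))^(p-1) :=
          Real.rpow_le_rpow (abs_nonneg u) hu4m (by linarith)
        have h2 : (4/(m:ℝ))^(p-1) = (4/(m:ℝ))^(p-3) * (4/m) * (4/m) := by
          rw [show p-1 = p-3+1+1 from by ring, Real.rpow_add_one (ne_of_gt ht),
            Real.rpow_add_one (ne_of_gt ht)]
        rw [h2, ← hBdef] at h1
        have c1 : B * (4/(m:ℝ)) ≤ B * 4 := mul_le_mul_of_nonneg_left ht4 hB0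
        have c2 : B * (4/(m:ℝ)) * (4/(m:ℝ)) ≤ B * 4 * 4 :=
          mul_le_mul c1 ht4 ht.le (mul_nonneg hB0 (by norm_num))
        linarith
      have eA3 : |u| ^ (p-2-2) * |u| ≤ B := by
        rw [mul_comm, abs_rpow_succ' u (show p-2-2+1 ≠ 0 by intro hc; linarith),
          show p-2-2+1 = p-3 from by ring]
        exact e3
      have hq2pos : (0:ℝ) ≤ p * (p-1) * (4*B) :=
        mul_nonneg (mul_nonneg hppos.le (by linarith)) (by linarith)
      have hq1pos : (0:ℝ) ≤ p * (16*B) :=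
        mul_nonneg hppos.le (by linarith)
      have hq0pos : (0:ℝ) ≤ 64 * B := by linarith
      have hq3pos : (0:ℝ) ≤ p * (p-1) * ((p-2)*B) :=
        mul_nonneg (mul_nonneg hppos.le (by linarith))
          (mul_nonneg (by linarith) hB0)
      -- individual term bounds
      have q2 : |p * (p-1) * |u| ^ (p-2) * g u z| ≤ p * (p-1) * (4*B) * M := by
        rw [abs_mul]
        refine mul_le_mul ?_ hb0 (abs_nonneg _) hq2pos
        rw [abs_mul, abs_mul, abs_of_pos hppos, abs_of_pos (show (0:ℝ) < p-1 by linarith),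
          abs_of_nonneg hrn]
        exact mul_le_mul_of_nonneg_left e2 (by nlinarith)
      have q1g : ∀ w : ℝ, |w| ≤ M → |p * |u| ^ (p-2) * u * w| ≤ p * (16*B) * M := by
        intro w hw
        rw [abs_mul]
        refine mul_le_mul ?_ hw (abs_nonneg _) hq1pos
        rw [abs_mul, abs_mul, abs_of_pos hppos, abs_of_nonneg hrn, mul_assoc]
        exact mul_le_mul_of_nonneg_left eA1 (by linarith)
      have q0g : ∀ w : ℝ, |w| ≤ M → |(|u| ^ p * w)| ≤ 64 * B * M := by
        intro w hw
        rw [abs_mul, abs_of_nonneg (Real.rpow_nonneg (abs_nonneg u) p)]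
        exact mul_le_mul e0 hw (abs_nonneg _) hq0pos
      have q3 : |p * (p-1) * ((p-2) * |u| ^ (p-2-2) * u) * g u z|
          ≤ p * (p-1) * ((p-2) * B) * M := by
        rw [abs_mul]
        refine mul_le_mul ?_ hb0 (abs_nonneg _) hq3pos
        rw [abs_mul, abs_mul, abs_mul, abs_mul, abs_of_pos hppos,
          abs_of_pos (show (0:ℝ) < p-1 by linarith),
          abs_of_pos (show (0:ℝ) < p-2 by linarith), abs_of_nonneg hrn4, mul_assoc (p-2)]
        refine mul_le_mul_of_nonneg_left ?_ (by nlinarith)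
        exact mul_le_mul_of_nonneg_left eA3 (by linarith)
      constructor
      · calc |p * (p-1) * |u| ^ (p-2) * g u z + p * |u| ^ (p-2) * u * g₁ u z
            + (p * |u| ^ (p-2) * u * g₁ u z + |u| ^ p * g₂ u z)|
            ≤ (|p * (p-1) * |u| ^ (p-2) * g u z| + |p * |u| ^ (p-2) * u * g₁ u z|)
              + (|p * |u| ^ (p-2) * u * g₁ u z| + |(|u| ^ p * g₂ u z)|) :=
            (abs_add_le _ _).trans (add_le_add (abs_add_le _ _) (abs_add_le _ _))
          _ ≤ (p * (p-1) * (4*B) * M + p * (16*B) * M)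
              + (p * (16*B) * M + 64 * B * M) :=
            add_le_add (add_le_add q2 (q1g _ hb1)) (add_le_add (q1g _ hb1) (q0g _ hb2))
          _ ≤ M * (p^3 + 9*p^2 + 38*p + 64) * B := by
            linarith [mul_nonneg (mul_nonneg hM0' hB0)
              (show (0:ℝ) ≤ p^3 + 5*p^2 + 10*p by nlinarith)]
      · calc |p * (p-1) * ((p-2) * |u| ^ (p-2-2) * u) * g u z
            + p * (p-1) * |u| ^ (p-2) * g₁ u z
            + (p * (p-1) * |u| ^ (p-2) * g₁ u z + p * |u| ^ (p-2) * u * g₂ u z)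
            + (p * (p-1) * |u| ^ (p-2) * g₁ u z + p * |u| ^ (p-2) * u * g₂ u z
              + (p * |u| ^ (p-2) * u * g₂ u z + |u| ^ p * g₃ u z))|
            ≤ ((|p * (p-1) * ((p-2) * |u| ^ (p-2-2) * u) * g u z|
              + |p * (p-1) * |u| ^ (p-2) * g₁ u z|)
              + (|p * (p-1) * |u| ^ (p-2) * g₁ u z| + |p * |u| ^ (p-2) * u * g₂ u z|))
              + ((|p * (p-1) * |u| ^ (p-2) * g₁ u z| + |p * |u| ^ (p-2) * u * g₂ u z|)
              + (|p * |u| ^ (p-2) * u * g₂ u z| + |(|u| ^ p * g₃ u z)|)) := by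
              refine (abs_add_le _ _).trans (add_le_add ?_ ?_)
              · exact (abs_add_le _ _).trans (add_le_add (abs_add_le _ _) (abs_add_le _ _))
              · exact (abs_add_le _ _).trans (add_le_add (abs_add_le _ _) (abs_add_le _ _))
          _ ≤ ((p * (p-1) * ((p-2) * B) * M + p * (p-1) * (4*B) * M)
              + (p * (p-1) * (4*B) * M + p * (16*B) * M))
              + ((p * (p-1) * (4*B) * M + p * (16*B) * M)
              + (p * (16*B) * M + 64 * B * M)) := by
            have q2' : |p * (p-1) * |u| ^ (p-2) * g₁ u z| ≤ p * (p-1) * (4*B) * M := by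
              rw [abs_mul]
              refine mul_le_mul ?_ hb1 (abs_nonneg _) hq2pos
              rw [abs_mul, abs_mul, abs_of_pos hppos,
                abs_of_pos (show (0:ℝ) < p-1 by linarith), abs_of_nonneg hrn]
              exact mul_le_mul_of_nonneg_left e2 (by nlinarith)
            exact add_le_add
              (add_le_add (add_le_add q3 q2') (add_le_add q2' (q1g _ hb2)))
              (add_le_add (add_le_add q2' (q1g _ hb2)) (add_le_add (q1g _ hb2) (q0g _ hb3)))
          _ ≤ M * (p^3 + 9*p^2 + 38*p + 64) * B := by
            linarith [mul_nonneg (mul_nonneg hM0' hB0)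
              (show (0:ℝ) ≤ 2*p^2 + 14*p by nlinarith)]
    -- apply the key Taylor lemma
    have hzero : |(0:ℝ)| ^ p * g 0 z = 0 := by
      rw [abs_zero, Real.zero_rpow (ne_of_gt hppos), zero_mul]
    have hzero1 : p * |(0:ℝ)| ^ (p-2) * 0 * g 0 z + |(0:ℝ)| ^ p * g₁ 0 z = 0 := by
      rw [abs_zero, Real.zero_rpow (ne_of_gt hppos), mul_zero, zero_mul, zero_mul, zero_add]
    have hkey := key_taylor (fun u : ℝ => |u| ^ p * g u z)
      (fun u : ℝ => p * |u| ^ (p-2) * u * g u z + |u| ^ p * g₁ u z)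
      (fun u : ℝ => p * (p-1) * |u| ^ (p-2) * g u z + p * |u| ^ (p-2) * u * g₁ u z
        + (p * |u| ^ (p-2) * u * g₁ u z + |u| ^ p * g₂ u z))
      (fun u : ℝ => p * (p-1) * ((p-2) * |u| ^ (p-2-2) * u) * g u z
        + p * (p-1) * |u| ^ (p-2) * g₁ u z
        + (p * (p-1) * |u| ^ (p-2) * g₁ u z + p * |u| ^ (p-2) * u * g₂ u z)
        + (p * (p-1) * |u| ^ (p-2) * g₁ u z + p * |u| ^ (p-2) * u * g₂ u z
          + (p * |u| ^ (p-2) * u * g₂ u z + |u| ^ p * g₃ u z)))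
      hdF hdF1 hdF2 hzero hzero1
      (1/(m:ℝ)) (M * (p^3 + 9*p^2 + 38*p + 64) * B) (M * (p^3 + 9*p^2 + 38*p + 64) * B)
      (by positivity)
      (fun u hu => (hbounds u hu).1) (fun u hu => (hbounds u hu).2)
      x y (by rw [show 3 * (1/(m:ℝ)) = 3 / m from by ring]; exact hx)
      hy
    have hfeq : (fun u => f u z) = fun u : ℝ => |u| ^ p * g u z := funext fun u => hf u z
    have hf1x : f₁ x z = p * |x| ^ (p-2) * x * g x z + |x| ^ p * g₁ x z := by
      have h1 : HasDerivAt (fun u => f u z) (f₁ x z) x := hf₁ z hz x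
      rw [hfeq] at h1
      exact h1.unique (hdF x)
    constructor
    · have := hkey.1
      simp only [hf]
      exact this
    · have := hkey.2
      simp only [hf, hf1x]
      exact this
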